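/- Let g : [0,T] → [0,∞) be C¹, F : [0,T] → [0,∞) continuous, and c ≥ 0 a constant, and suppose (1/2)(g²)'(t) + c·g(t)² ≤ g(t)·F(t) for all t ∈ [0,T]. Then g(t) + c∫₀ᵗ g(s) ds ≤ g(0) + ∫₀ᵗ F(s) ds for all t ∈ [0,T]. -/

import Mathlib

open intervalIntegral

/-- If `g : [0,T] → [0,∞)` is `C¹`, `F ≥ 0` is continuous, `c ≥ 0` and
`(1/2)(g²)' + c g² ≤ g F` on `[0,T]`, then `g(t) + c ∫₀ᵗ g ≤ g(0) + ∫₀ᵗ F`. -/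
theorem stmt6 (T c : ℝ) (hT : 0 ≤ T) (hc : 0 ≤ c)
    (g F : ℝ → ℝ) (hg : ContDiff ℝ 1 g) (hF : Continuous F)
    (hgpos : ∀ t ∈ Set.Icc 0 T, 0 ≤ g t)
    (hFpos : ∀ t ∈ Set.Icc 0 T, 0 ≤ F t)
    (hineq : ∀ t ∈ Set.Icc 0 T,
      (1 / 2) * deriv (fun s => (g s) ^ 2) t + c * (g t) ^ 2 ≤ g t * F t) :
    ∀ t ∈ Set.Icc 0 T,
      g t + c * ∫ s in (0 : ℝ)..t, g s ≤ g 0 + ∫ s in (0 : ℝ)..t, F s := by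
  intro t ht
  obtain ⟨ht0, htT⟩ := ht
  have hgd : Differentiable ℝ g := hg.differentiable one_ne_zero
  have hgc : Continuous g := hgd.continuous
  have hg'c : Continuous (deriv g) := hg.continuous_deriv le_rfl
  have key : ∀ δ : ℝ, 0 < δ →
      g t + c * ∫ s in (0:ℝ)..t, g s ≤
        (g 0 + ∫ s in (0:ℝ)..t, F s) + δ * (1 + c * t) := by
    intro δ hδ
    set h : ℝ → ℝ := fun s => Real.sqrt ((g s)^2 + δ^2) with hh
    have hpos : ∀ x, 0 < (g x)^2 + δ^2 := fun x => by positivity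
    have hhpos : ∀ x, 0 < h x := fun x => Real.sqrt_pos.mpr (hpos x)
    have hder : ∀ x, HasDerivAt h (g x * deriv g x / h x) x := by
      intro x
      have h1 : HasDerivAt (fun s => (g s)^2 + δ^2)
          ((2 : ℕ) * g x ^ 1 * deriv g x) x :=
        ((hgd x).hasDerivAt.pow 2).add_const _
      have h2 := (Real.hasDerivAt_sqrt (ne_of_gt (hpos x))).comp x h1
      refine h2.congr_deriv ?_
      have := (hhpos x).ne'
      field_simp [hh]
      ring
    have hhc : Continuous h := ((hgc.pow 2).add continuous_const).sqrt
    have hdcont : Continuous (fun x => g x * deriv g x / h x) :=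
      (hgc.mul hg'c).div hhc (fun x => (hhpos x).ne')
    have hftc : h t - h 0 = ∫ s in (0:ℝ)..t, g s * deriv g s / h s :=
      (intervalIntegral.integral_eq_sub_of_hasDerivAt (fun x _ => hder x)
        (hdcont.intervalIntegrable 0 t)).symm
    have hgh : ∀ x ∈ Set.Icc (0:ℝ) T, g x ≤ h x := by
      intro x hx
      have hgx := hgpos x hx
      calc g x = Real.sqrt ((g x)^2) := (Real.sqrt_sq hgx).symm
        _ ≤ h x := Real.sqrt_le_sqrt (by nlinarith)
    have hhg : ∀ x ∈ Set.Icc (0:ℝ) T, h x ≤ g x + δ := by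
      intro x hx
      have hgx := hgpos x hx
      calc h x ≤ Real.sqrt ((g x + δ)^2) := Real.sqrt_le_sqrt (by nlinarith)
        _ = g x + δ := Real.sqrt_sq (by positivity)
    have hsub : ∀ x ∈ Set.Icc (0:ℝ) t, x ∈ Set.Icc (0:ℝ) T :=
      fun x hx => ⟨hx.1, hx.2.trans htT⟩
    have hbound : ∀ x ∈ Set.Icc (0:ℝ) t,
        g x * deriv g x / h x ≤ F x - c * ((g x)^2 / h x) := by
      intro x hx
      have hxT := hsub x hx
      have hgx := hgpos x hxT
      have hFx := hFpos x hxT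
      have hghx := hgh x hxT
      have hdsq : deriv (fun s => (g s)^2) x = (2:ℕ) * g x ^ 1 * deriv g x :=
        ((hgd x).hasDerivAt.pow 2).deriv
      have hi := hineq x hxT
      rw [hdsq] at hi
      have h3 : g x * deriv g x + c * (g x)^2 ≤ F x * h x := by nlinarith
      have h4 := (div_le_iff₀ (hhpos x)).mpr h3
      rw [add_div] at h4
      rw [← mul_div_assoc]
      linarith
    have hq : Continuous (fun x => (g x)^2 / h x) :=
      ((hgc.pow 2).div hhc (fun x => (hhpos x).ne'))
    have hint1 : (∫ s in (0:ℝ)..t, g s * deriv g s / h s) ≤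
        ∫ s in (0:ℝ)..t, (F s - c * ((g s)^2 / h s)) := by
      apply intervalIntegral.integral_mono_on ht0
        (hdcont.intervalIntegrable 0 t)
        ((hF.sub (continuous_const.mul hq)).intervalIntegrable 0 t)
      exact hbound
    have hsplit : (∫ s in (0:ℝ)..t, (F s - c * ((g s)^2 / h s))) =
        (∫ s in (0:ℝ)..t, F s) - c * ∫ s in (0:ℝ)..t, (g s)^2 / h s := by
      rw [intervalIntegral.integral_sub (f := F) (g := fun s => c * ((g s)^2 / h s))
        (hF.intervalIntegrable 0 t)
        ((continuous_const.mul hq).intervalIntegrable 0 t),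
        intervalIntegral.integral_const_mul]
    have hint2 : (∫ s in (0:ℝ)..t, g s) - δ * t ≤
        ∫ s in (0:ℝ)..t, (g s)^2 / h s := by
      have : (∫ s in (0:ℝ)..t, (g s - δ)) ≤ ∫ s in (0:ℝ)..t, (g s)^2 / h s := by
        apply intervalIntegral.integral_mono_on ht0
          ((hgc.sub continuous_const).intervalIntegrable 0 t)
          (hq.intervalIntegrable 0 t)
        intro x hx
        have hxT := hsub x hx
        have hgx := hgpos x hxT
        have h1 := hgh x hxT
        have h2 := hhg x hxT
        show g x - δ ≤ _
        rw [le_div_iff₀ (hhpos x)]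
        nlinarith
      rw [intervalIntegral.integral_sub (hgc.intervalIntegrable 0 t)
        (intervalIntegrable_const), intervalIntegral.integral_const] at this
      simp only [smul_eq_mul, sub_zero] at this
      linarith [this]
    have hgt : g t ≤ h t := hgh t ⟨ht0, htT⟩
    have hg0 : h 0 ≤ g 0 + δ := hhg 0 ⟨le_rfl, hT⟩
    have hIg2 : c * ((∫ s in (0:ℝ)..t, g s) - δ * t) ≤
        c * ∫ s in (0:ℝ)..t, (g s)^2 / h s := mul_le_mul_of_nonneg_left hint2 hc
    nlinarith [hftc, hint1, hsplit, hgt, hg0, hIg2]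
  refine le_of_forall_pos_le_add ?_
  intro ε hε
  have hct : (0:ℝ) < 1 + c * t := by nlinarith
  have := key (ε / (1 + c * t)) (by positivity)
  rw [div_mul_cancel₀ _ hct.ne'] at this
  linarith
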